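/- Fix an integer k ≥ 1. As n → ∞ along integers with n ≡ k (mod 2), the ratio |H′_sc(k,k;n)| / |H_sc(k,k;n)| tends to 1, where H′_sc(k,k;n) is the set of self-conjugate partitions of n in the (k,k)-hook that contain the k×k square (λ_k ≥ k) and H_sc(k,k;n) is the set of all self-conjugate partitions of n in the (k,k)-hook. -/

import Mathlib

/-- `H(k,l;n)`: the set of partitions of `n` in the `(k,l)`-hook, i.e. Young diagrams
with `n` cells (the `(i+1)`-st part being `rowLen i`) with `λ_{k+1} ≤ l`. -/
def hook (k l n : ℕ) : Set YoungDiagram :=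
  {μ | μ.card = n ∧ μ.rowLen k ≤ l}

/-- `H_sc(k,k;n)`: the set of self-conjugate partitions of `n` in the `(k,k)`-hook. -/
def hookSC (k n : ℕ) : Set YoungDiagram :=
  {μ | μ ∈ hook k k n ∧ μ.transpose = μ}

/-- `H′_sc(k,k;n)`: the set of self-conjugate partitions of `n` in the `(k,k)`-hook that
contain the `k × k` square, i.e. with `λ_k ≥ k`. -/
def hookSC' (k n : ℕ) : Set YoungDiagram :=
  {μ | μ ∈ hookSC k n ∧ k ≤ μ.rowLen (k - 1)}

namespace Stmt15Aux

/-- Cells of a self-conjugate-style diagram: rows `0..d-1` of lengths `R`, symmetrized. -/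
def altCells (d : ℕ) (R : ℕ → ℕ) : Finset (ℕ × ℕ) :=
  ((Finset.range d).biUnion fun i => {i} ×ˢ Finset.range (R i)) ∪
  ((Finset.range d).biUnion fun j => Finset.range (R j) ×ˢ {j})

lemma mem_altCells {d : ℕ} {R : ℕ → ℕ} {i j : ℕ} :
    (i, j) ∈ altCells d R ↔ (i < d ∧ j < R i) ∨ (j < d ∧ i < R j) := by
  simp [altCells, Finset.mem_biUnion, Finset.mem_product, and_comm]

lemma card_altCells {d : ℕ} {R : ℕ → ℕ} (hR : ∀ i < d, d ≤ R i) :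
    (altCells d R).card + d * d = 2 * ∑ i ∈ Finset.range d, R i := by
  have hA : (((Finset.range d).biUnion fun i => ({i} : Finset ℕ) ×ˢ Finset.range (R i))).card
      = ∑ i ∈ Finset.range d, R i := by
    rw [Finset.card_biUnion]
    · simp
    · intro x _ y _ hxy
      refine Finset.disjoint_left.mpr ?_
      rintro ⟨a, b⟩ hc hc'
      simp only [Finset.mem_product, Finset.mem_singleton] at hc hc'
      exact hxy (hc.1.symm.trans hc'.1)
  have hB : (((Finset.range d).biUnion fun j => Finset.range (R j) ×ˢ ({j} : Finset ℕ))).card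
      = ∑ i ∈ Finset.range d, R i := by
    rw [Finset.card_biUnion]
    · simp
    · intro x _ y _ hxy
      refine Finset.disjoint_left.mpr ?_
      rintro ⟨a, b⟩ hc hc'
      simp only [Finset.mem_product, Finset.mem_singleton] at hc hc'
      exact hxy (hc.2.symm.trans hc'.2)
  have hI : (((Finset.range d).biUnion fun i => ({i} : Finset ℕ) ×ˢ Finset.range (R i)) ∩
      ((Finset.range d).biUnion fun j => Finset.range (R j) ×ˢ ({j} : Finset ℕ)))
      = Finset.range d ×ˢ Finset.range d := by
    ext ⟨i, j⟩
    simp only [Finset.mem_inter, Finset.mem_biUnion, Finset.mem_product, Finset.mem_singleton,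
      Finset.mem_range]
    constructor
    · rintro ⟨⟨a, ha, rfl, hj⟩, ⟨b, hb, _, rfl⟩⟩
      exact ⟨ha, hb⟩
    · rintro ⟨hi, hj⟩
      exact ⟨⟨i, hi, rfl, lt_of_lt_of_le hj (hR i hi)⟩, ⟨j, hj, lt_of_lt_of_le hi (hR j hj), rfl⟩⟩
  have := Finset.card_union_add_card_inter
    ((Finset.range d).biUnion fun i => ({i} : Finset ℕ) ×ˢ Finset.range (R i))
    ((Finset.range d).biUnion fun j => Finset.range (R j) ×ˢ ({j} : Finset ℕ))
  rw [hI, hA, hB, Finset.card_product, Finset.card_range] at this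
  rw [altCells]
  omega

lemma isLowerSet_altCells {d : ℕ} {R : ℕ → ℕ}
    (hR : ∀ i j, i ≤ j → j < d → R j ≤ R i) :
    IsLowerSet (altCells d R : Set (ℕ × ℕ)) := by
  rintro ⟨i, j⟩ ⟨i', j'⟩ ⟨hi, hj⟩ h
  have h' : (i, j) ∈ altCells d R := h
  rw [mem_altCells] at h'
  show (i', j') ∈ altCells d R
  rw [mem_altCells]
  simp only at hi hj
  rcases h' with ⟨h1, h2⟩ | ⟨h1, h2⟩
  · exact Or.inl ⟨lt_of_le_of_lt hi h1, lt_of_lt_of_le (lt_of_le_of_lt hj h2) (hR i' i hi h1)⟩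
  · exact Or.inr ⟨lt_of_le_of_lt hj h1, lt_of_lt_of_le (lt_of_le_of_lt hi h2) (hR j' j hj h1)⟩

/-- The self-conjugate Young diagram with Durfee-style data. -/
def sqYD (d : ℕ) (R : ℕ → ℕ) (hR : ∀ i j, i ≤ j → j < d → R j ≤ R i) : YoungDiagram :=
  ⟨altCells d R, isLowerSet_altCells hR⟩

lemma mem_sqYD {d R hR} {i j : ℕ} :
    (i, j) ∈ sqYD d R hR ↔ (i < d ∧ j < R i) ∨ (j < d ∧ i < R j) := mem_altCells

lemma sqYD_transpose {d R hR} : (sqYD d R hR).transpose = sqYD d R hR := by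
  ext ⟨i, j⟩
  rw [YoungDiagram.mem_cells, YoungDiagram.mem_cells, YoungDiagram.mem_transpose]
  show (j, i) ∈ sqYD d R hR ↔ _
  rw [mem_sqYD, mem_sqYD]
  tauto

lemma rowLen_sqYD {d R hR} (hd : ∀ i < d, d ≤ R i) {i : ℕ} (hi : i < d) :
    (sqYD d R hR).rowLen i = R i := by
  have h1 : ¬ ((i, R i) ∈ sqYD d R hR) := by
    rw [mem_sqYD]
    push_neg
    exact ⟨fun _ => le_refl _, fun h => absurd (hd i hi) (by omega)⟩
  have h2 : (i, R i - 1) ∈ sqYD d R hR := by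
    rw [mem_sqYD]
    have hd' := hd i hi
    exact Or.inl ⟨hi, by omega⟩
  rw [YoungDiagram.mem_iff_lt_rowLen] at h1 h2
  omega

/-- Structure: a self-conjugate diagram with `rowLen d ≤ d` has cells `altCells d rowLen`. -/
lemma cells_eq_altCells {μ : YoungDiagram} {d : ℕ} (hsc : μ.transpose = μ)
    (hd : μ.rowLen d ≤ d) : μ.cells = altCells d μ.rowLen := by
  ext ⟨i, j⟩
  rw [YoungDiagram.mem_cells, mem_altCells]
  constructor
  · intro h
    by_cases hi : i < d
    · exact Or.inl ⟨hi, YoungDiagram.mem_iff_lt_rowLen.mp h⟩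
    · have hj : j < d := by
        by_contra hj
        have hm : (d, d) ∈ μ := μ.up_left_mem (le_of_not_gt hi) (le_of_not_gt hj) h
        rw [YoungDiagram.mem_iff_lt_rowLen] at hm
        omega
      have hswap : (j, i) ∈ μ := by
        rw [← hsc, YoungDiagram.mem_transpose]
        exact h
      exact Or.inr ⟨hj, YoungDiagram.mem_iff_lt_rowLen.mp hswap⟩
  · rintro (⟨h1, h2⟩ | ⟨h1, h2⟩)
    · exact YoungDiagram.mem_iff_lt_rowLen.mpr h2
    · have : (j, i) ∈ μ := YoungDiagram.mem_iff_lt_rowLen.mpr h2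
      rw [← hsc, YoungDiagram.mem_transpose] at this
      exact this


def armT (k M : ℕ) (u : Fin (k-1) → Fin M) (i : ℕ) : ℕ :=
  if h : i < k-1 then (u ⟨i, h⟩ : ℕ) + (k-2-i)*M else 0

def armF (k M mm : ℕ) (u : Fin (k-1) → Fin M) (i : ℕ) : ℕ :=
  if i = 0 then mm - ∑ j ∈ Finset.range (k-1), armT k M u j else armT k M u (i-1)

lemma armT_le {k M : ℕ} (u : Fin (k-1) → Fin M) {i : ℕ} (hi : i < k-1) :
    armT k M u i + 1 ≤ (k-1)*M := by
  have hu : (u ⟨i, hi⟩ : ℕ) < M := (u ⟨i, hi⟩).isLt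
  have h1 : (k-2-i)*M ≤ (k-2)*M := Nat.mul_le_mul_right M (by omega)
  have h2 : (k-1)*M = M + (k-2)*M := by
    have : k-1 = 1 + (k-2) := by omega
    rw [this, add_mul, one_mul]
  rw [armT, dif_pos hi]
  omega

lemma S_le {k M : ℕ} (u : Fin (k-1) → Fin M) :
    (∑ j ∈ Finset.range (k-1), armT k M u j) ≤ (k-1)*((k-1)*M) := by
  calc (∑ j ∈ Finset.range (k-1), armT k M u j)
      ≤ ∑ _j ∈ Finset.range (k-1), (k-1)*M :=
        Finset.sum_le_sum fun j hj => by
          have := armT_le u (Finset.mem_range.mp hj); omega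
    _ = (k-1)*((k-1)*M) := by rw [Finset.sum_const, Finset.card_range, smul_eq_mul]

lemma S_add_le {k M mm : ℕ} (u : Fin (k-1) → Fin M) (hmm2 : 2*(k*k)*M ≤ mm) :
    (∑ j ∈ Finset.range (k-1), armT k M u j) + (k-1)*M ≤ mm := by
  have h1 := S_le u
  have h2 : (k-1)*((k-1)*M) + (k-1)*M ≤ 2*(k*k)*M := by
    have e1 : (k-1)*((k-1)*M) = ((k-1)*(k-1))*M := by ring
    have e2 : ((k-1)*(k-1))*M ≤ (k*k)*M := Nat.mul_le_mul_right M (Nat.mul_le_mul (by omega) (by omega))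
    have e3 : (k-1)*M ≤ (k*k)*M := Nat.mul_le_mul_right M (by
      rcases Nat.eq_zero_or_pos k with rfl | h
      · simp
      · calc k-1 ≤ k := Nat.sub_le k 1
          _ ≤ k*k := Nat.le_mul_of_pos_left k h)
    have e0 : 2*(k*k)*M = (k*k)*M + (k*k)*M := by ring
    omega
  have e0 : 2*(k*k)*M = (k*k)*M + (k*k)*M := by ring
  have e1 : (k-1)*((k-1)*M) = ((k-1)*(k-1))*M := by ring
  omega

lemma sum_armF {k M mm : ℕ} (u : Fin (k-1) → Fin M) (hk : 1 ≤ k)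
    (hmm2 : 2*(k*k)*M ≤ mm) :
    ∑ i ∈ Finset.range k, armF k M mm u i = mm := by
  have hS := S_add_le u hmm2
  have hk' : k = (k-1) + 1 := by omega
  rw [show Finset.range k = Finset.range ((k-1)+1) by rw [← hk'], Finset.sum_range_succ']
  have h1 : ∀ i ∈ Finset.range (k-1), armF k M mm u (i+1) = armT k M u i := by
    intro i _
    rw [armF, if_neg (by omega)]
    simp
  rw [Finset.sum_congr rfl h1]
  rw [armF, if_pos rfl]
  have he : (Finset.range (k-1)).sum (armT k M u) = ∑ j ∈ Finset.range (k-1), armT k M u j := rfl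
  omega

lemma armT_anti {k M : ℕ} (u : Fin (k-1) → Fin M) {a b : ℕ} (hab : a ≤ b) (hb : b < k-1) :
    armT k M u b ≤ armT k M u a := by
  rcases eq_or_lt_of_le hab with rfl | hlt
  · exact le_refl _
  · have ha : a < k-1 := by omega
    have hub : (u ⟨b, hb⟩ : ℕ) < M := (u ⟨b, hb⟩).isLt
    have e1 : (k-1-b)*M = M + (k-2-b)*M := by
      have : k-1-b = 1 + (k-2-b) := by omega
      rw [this, add_mul, one_mul]
    have e2 : (k-1-b)*M ≤ (k-2-a)*M := Nat.mul_le_mul_right M (by omega)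
    rw [armT, armT, dif_pos hb, dif_pos ha]
    have : 0 ≤ (u ⟨a, ha⟩ : ℕ) := Nat.zero_le _
    omega

lemma armF_anti {k M mm : ℕ} (u : Fin (k-1) → Fin M) (hmm2 : 2*(k*k)*M ≤ mm) :
    ∀ i j, i ≤ j → j < k → armF k M mm u j ≤ armF k M mm u i := by
  intro i j hij hj
  rcases Nat.eq_zero_or_pos j with rfl | hj0
  · interval_cases i; exact le_refl _
  rcases Nat.eq_zero_or_pos i with rfl | hi0
  · -- armF j = armT (j-1) ≤ (k-1)*M ≤ mm - S = armF 0
    have hS := S_add_le u hmm2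
    have hjk : j - 1 < k-1 := by omega
    have h1 := armT_le u hjk
    rw [armF, if_neg (by omega), armF, if_pos rfl]
    have h2 : armT k M u (j-1) ≤ ∑ x ∈ Finset.range (k-1), armT k M u x + (k-1)*M := by omega
    omega
  · rw [armF, if_neg (by omega), armF, if_neg (by omega)]
    exact armT_anti u (by omega) (by omega)


lemma altCells_congr {d : ℕ} {R R' : ℕ → ℕ} (h : ∀ i < d, R i = R' i) :
    altCells d R = altCells d R' := by
  ext ⟨i, j⟩
  rw [mem_altCells, mem_altCells]
  constructor
  · rintro (⟨h1, h2⟩ | ⟨h1, h2⟩)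
    · exact Or.inl ⟨h1, by rw [← h i h1]; exact h2⟩
    · exact Or.inr ⟨h1, by rw [← h j h1]; exact h2⟩
  · rintro (⟨h1, h2⟩ | ⟨h1, h2⟩)
    · exact Or.inl ⟨h1, by rw [h i h1]; exact h2⟩
    · exact Or.inr ⟨h1, by rw [h j h1]; exact h2⟩

lemma altCells_mono {d : ℕ} {R R' : ℕ → ℕ} (h : ∀ i < d, R i ≤ R' i) :
    altCells d R ⊆ altCells d R' := by
  intro c hc
  obtain ⟨i, j⟩ := c
  rw [mem_altCells] at hc ⊢
  rcases hc with ⟨h1, h2⟩ | ⟨h1, h2⟩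
  · exact Or.inl ⟨h1, lt_of_lt_of_le h2 (h i h1)⟩
  · exact Or.inr ⟨h1, lt_of_lt_of_le h2 (h j h1)⟩

lemma rowLen_le_card (μ : YoungDiagram) (i : ℕ) : μ.rowLen i ≤ μ.card := by
  rw [YoungDiagram.rowLen_eq_card]
  exact Finset.card_le_card (Finset.filter_subset _ _)

/-- Finiteness of `hookSC k n`. -/
lemma hookSC_finite (k n : ℕ) : (hookSC k n).Finite := by
  apply Set.Finite.of_finite_image (f := fun μ : YoungDiagram =>
    (fun i : Fin k => (⟨min (μ.rowLen i) n, by omega⟩ : Fin (n+1))))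
  · exact Set.toFinite _
  · intro μ hμ ν hν hfeq
    obtain ⟨⟨hcard, hrk⟩, hsc⟩ := hμ
    obtain ⟨⟨hcard', hrk'⟩, hsc'⟩ := hν
    have hR : ∀ i < k, μ.rowLen i = ν.rowLen i := by
      intro i hi
      have := congrFun hfeq ⟨i, hi⟩
      simp only [Fin.mk.injEq] at this
      have h1 : μ.rowLen i ≤ n := hcard ▸ rowLen_le_card μ i
      have h2 : ν.rowLen i ≤ n := hcard' ▸ rowLen_le_card ν i
      omega
    apply YoungDiagram.ext
    rw [cells_eq_altCells hsc hrk, cells_eq_altCells hsc' hrk']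
    exact altCells_congr hR

/-- Lower bound: `M^(k-1) ≤ |hookSC' k n|` when `n = k² + 2mm` and `2k²M ≤ mm`. -/
lemma lower_bound (k M mm n : ℕ) (hk : 1 ≤ k) (hmm2 : 2*(k*k)*M ≤ mm)
    (hn : n = k*k + 2*mm) :
    M^(k-1) ≤ (hookSC' k n).ncard := by
  have hanti : ∀ u : Fin (k-1) → Fin M, ∀ i j, i ≤ j → j < k →
      k + armF k M mm u j ≤ k + armF k M mm u i := by
    intro u i j hij hj
    have := armF_anti u hmm2 i j hij hj
    omega
  set f : (Fin (k-1) → Fin M) → YoungDiagram :=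
    fun u => sqYD k (fun i => k + armF k M mm u i) (hanti u) with hf
  have hd : ∀ (u : Fin (k-1) → Fin M), ∀ i < k, k ≤ k + armF k M mm u i :=
    fun u i _ => Nat.le_add_right k _
  have hmem : ∀ u, f u ∈ hookSC' k n := by
    intro u
    have hcard : (f u).card = n := by
      have h1 := card_altCells (R := fun i => k + armF k M mm u i) (d := k) (hd u)
      have h2 : ∑ i ∈ Finset.range k, (k + armF k M mm u i)
          = k*k + mm := by
        rw [Finset.sum_add_distrib, Finset.sum_const, Finset.card_range, smul_eq_mul,
          sum_armF u hk hmm2]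
      rw [h2] at h1
      show (altCells k _).card = n
      omega
    have hrk : (f u).rowLen k ≤ k := by
      by_contra h
      have : (k, k) ∈ f u := YoungDiagram.mem_iff_lt_rowLen.mpr (by omega)
      rw [hf] at this
      rw [mem_sqYD] at this
      omega
    have hrk1 : k ≤ (f u).rowLen (k-1) := by
      have : (k-1, k-1) ∈ f u := by
        rw [hf, mem_sqYD]
        exact Or.inl ⟨by omega, by omega⟩
      rw [YoungDiagram.mem_iff_lt_rowLen] at this
      omega
    exact ⟨⟨⟨hcard, hrk⟩, sqYD_transpose⟩, hrk1⟩
  have hinj : Set.InjOn f Set.univ := by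
    intro u _ u' _ heq
    funext i
    have hik : (i : ℕ) + 1 < k := by omega
    have h1 : (f u).rowLen (i+1) = k + armF k M mm u (i+1) :=
      rowLen_sqYD (hd u) hik
    have h2 : (f u').rowLen (i+1) = k + armF k M mm u' (i+1) :=
      rowLen_sqYD (hd u') hik
    rw [heq] at h1
    rw [h1] at h2
    have h3 : armF k M mm u (i+1) = armF k M mm u' (i+1) := by omega
    rw [armF, if_neg (by omega), armF, if_neg (by omega)] at h3
    simp only [Nat.add_sub_cancel] at h3
    rw [armT, armT, dif_pos i.isLt, dif_pos i.isLt] at h3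
    have : (u ⟨i, i.isLt⟩ : ℕ) = (u' ⟨i, i.isLt⟩ : ℕ) := by omega
    have hii : (⟨(i : ℕ), i.isLt⟩ : Fin (k-1)) = i := by ext; rfl
    rw [hii] at this
    exact Fin.ext this
  have hfin : (hookSC' k n).Finite :=
    (hookSC_finite k n).subset (fun μ hμ => hμ.1)
  calc M^(k-1) = (Set.univ : Set (Fin (k-1) → Fin M)).ncard := by
        rw [Set.ncard_univ, Nat.card_eq_fintype_card, Fintype.card_fun]
        simp
    _ ≤ (hookSC' k n).ncard :=
        Set.ncard_le_ncard_of_injOn f (fun u _ => hmem u) hinj hfin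

/-- If two elements of the "small" set agree on rows `0..k-3` they are equal. -/
lemma small_eq {k n : ℕ} (hk : 2 ≤ k) {μ ν : YoungDiagram}
    (hμ : μ ∈ hookSC k n \ hookSC' k n) (hν : ν ∈ hookSC k n \ hookSC' k n)
    (hR : ∀ i < k-2, μ.rowLen i = ν.rowLen i) : μ = ν := by
  obtain ⟨hμs, hμn⟩ := hμ
  obtain ⟨hνs, hνn⟩ := hν
  have hdμ : μ.rowLen (k-1) ≤ k-1 := by
    by_contra h
    exact hμn ⟨hμs, by omega⟩
  have hdν : ν.rowLen (k-1) ≤ k-1 := by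
    by_contra h
    exact hνn ⟨hνs, by omega⟩
  obtain ⟨⟨hcard, _⟩, hsc⟩ := hμs
  obtain ⟨⟨hcard', _⟩, hsc'⟩ := hνs
  have main : ∀ α β : YoungDiagram, α.transpose = α → β.transpose = β →
      α.rowLen (k-1) ≤ k-1 → β.rowLen (k-1) ≤ k-1 → α.card = n → β.card = n →
      (∀ i < k-2, α.rowLen i = β.rowLen i) → α.rowLen (k-2) ≤ β.rowLen (k-2) → α = β := by
    intro α β hscα hscβ hdα hdβ hcα hcβ hRi hlast
    have hsub : α.cells ⊆ β.cells := by
      rw [cells_eq_altCells hscα hdα, cells_eq_altCells hscβ hdβ]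
      apply altCells_mono
      intro i hi
      rcases lt_or_ge i (k-2) with h | h
      · exact (hRi i h).le
      · have hieq : i = k-2 := by omega
        rw [hieq]; exact hlast
    apply YoungDiagram.ext
    refine Finset.eq_of_subset_of_card_le hsub ?_
    have e1 : α.cells.card = n := hcα
    have e2 : β.cells.card = n := hcβ
    omega
  rcases le_total (μ.rowLen (k-2)) (ν.rowLen (k-2)) with h | h
  · exact main μ ν hsc hsc' hdμ hdν hcard hcard' hR h
  · exact (main ν μ hsc' hsc hdν hdμ hcard' hcard (fun i hi => (hR i hi).symm) h).symm

lemma upper_bound (k n : ℕ) (hk : 1 ≤ k) (hn : 1 ≤ n) :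
    n * (hookSC k n \ hookSC' k n).ncard ≤ (n+1)^(k-1) := by
  rcases Nat.lt_or_ge k 2 with h1 | h2
  · have hk1 : k = 1 := by omega
    subst hk1
    have hemp : hookSC 1 n \ hookSC' 1 n = ∅ := by
      ext μ
      simp only [Set.mem_diff, Set.mem_empty_iff_false, iff_false]
      rintro ⟨hs, hn'⟩
      have hd : μ.rowLen 0 ≤ 0 := by
        by_contra h
        exact hn' ⟨hs, by simp only [show (1:ℕ)-1 = 0 from rfl]; omega⟩
      obtain ⟨⟨hcard, _⟩, hsc⟩ := hs
      have hce := cells_eq_altCells hsc hd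
      have he : altCells 0 μ.rowLen = ∅ := by
        rw [altCells]; simp
      rw [he] at hce
      have : μ.card = 0 := by
        show μ.cells.card = 0
        rw [hce]; simp
      omega
    rw [hemp]; simp
  · have hle : (hookSC k n \ hookSC' k n).ncard ≤ (n+1)^(k-2) := by
      refine le_trans (Set.ncard_le_ncard_of_injOn
        (fun μ : YoungDiagram => (fun i : Fin (k-2) => (⟨min (μ.rowLen i) n, by omega⟩ : Fin (n+1))))
        (fun μ _ => Set.mem_univ _) ?_ (Set.toFinite _)) ?_
      · intro μ hμ ν hν hfeq
        apply small_eq h2 hμ hν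
        intro i hi
        have heq := congrFun hfeq ⟨i, hi⟩
        simp only [Fin.mk.injEq] at heq
        have e1 : μ.rowLen i ≤ n := hμ.1.1.1 ▸ rowLen_le_card μ i
        have e2 : ν.rowLen i ≤ n := hν.1.1.1 ▸ rowLen_le_card ν i
        omega
      · rw [Set.ncard_univ, Nat.card_eq_fintype_card, Fintype.card_fun]
        simp
    calc n * (hookSC k n \ hookSC' k n).ncard ≤ n * (n+1)^(k-2) :=
          Nat.mul_le_mul_left n hle
      _ ≤ (n+1) * (n+1)^(k-2) := Nat.mul_le_mul_right _ (by omega)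
      _ = (n+1)^(k-1) := by
          rw [← pow_succ']
          congr 1
          omega

lemma kk_mod (k : ℕ) : (k*k) % 2 = k % 2 := by
  rcases Nat.even_or_odd k with ⟨m, rfl⟩ | ⟨m, rfl⟩
  · have : (m+m)*(m+m) = 2*(2*m*m) := by ring
    rw [this]
    omega
  · have : (2*m+1)*(2*m+1) = 2*(2*m*m+2*m) + 1 := by ring
    rw [this]
    omega

lemma key (k : ℕ) (hk : 1 ≤ k) (n : ℕ) (hn : 10*(k*k)+1 ≤ n) (hpar : n % 2 = k % 2) :
    1 ≤ (hookSC' k n).ncard ∧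
    n * (hookSC k n \ hookSC' k n).ncard ≤ (16*(k*k))^(k-1) * (hookSC' k n).ncard := by
  have hkk := kk_mod k
  set mm := (n - k*k) / 2 with hmm
  have hnrep : n = k*k + 2*mm := by omega
  set M := mm / (2*(k*k)) with hM
  have hb0 : 0 < 2*(k*k) := by positivity
  have hdm := Nat.div_add_mod mm (2*(k*k))
  have hr := Nat.mod_lt mm hb0
  have e : (2*(k*k))*M = 2*((k*k)*M) := by ring
  rw [e] at hdm
  have hn8 : n ≤ 8*((k*k)*M) := by omega
  have hM1 : 1 ≤ M := by
    rcases Nat.eq_zero_or_pos M with hM0 | hM1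
    · exfalso
      rw [hM0, mul_zero] at hn8
      omega
    · exact hM1
  have hmm2 : 2*(k*k)*M ≤ mm := by rw [e]; omega
  have hlow := lower_bound k M mm n hk hmm2 hnrep
  have hF1 : 1 ≤ (hookSC' k n).ncard :=
    le_trans (Nat.one_le_pow _ _ hM1) hlow
  refine ⟨hF1, ?_⟩
  have hup := upper_bound k n hk (by omega)
  have h16 : n + 1 ≤ (16*(k*k))*M := by
    have : (16*(k*k))*M = 2*(8*((k*k)*M)) := by ring
    omega
  calc n * (hookSC k n \ hookSC' k n).ncard ≤ (n+1)^(k-1) := hup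
    _ ≤ ((16*(k*k))*M)^(k-1) := Nat.pow_le_pow_left h16 _
    _ = (16*(k*k))^(k-1) * M^(k-1) := mul_pow _ _ _
    _ ≤ (16*(k*k))^(k-1) * (hookSC' k n).ncard := Nat.mul_le_mul_left _ hlow

theorem stmt15_aux (k : ℕ) (hk : 1 ≤ k) :
    Filter.Tendsto
      (fun n : ℕ => ((hookSC' k n).ncard : ℝ) / ((hookSC k n).ncard : ℝ))
      (Filter.atTop ⊓ Filter.principal {n : ℕ | n % 2 = k % 2})
      (nhds 1) := by
  set l := Filter.atTop ⊓ Filter.principal {n : ℕ | n % 2 = k % 2} with hl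
  have hev : ∀ᶠ n in l, 10*(k*k)+1 ≤ n ∧ n % 2 = k % 2 := by
    rw [hl]
    apply Filter.eventually_inf_principal.mpr
    filter_upwards [Filter.eventually_ge_atTop (10*(k*k)+1)] with n h1 h2
    exact ⟨h1, h2⟩
  have hq0 : Filter.Tendsto (fun n : ℕ =>
      ((hookSC k n \ hookSC' k n).ncard : ℝ) / ((hookSC k n).ncard : ℝ)) l (nhds 0) := by
    apply tendsto_of_tendsto_of_tendsto_of_le_of_le' (tendsto_const_nhds)
      ((tendsto_const_div_atTop_nhds_zero_nat (((16*(k*k))^(k-1) : ℕ) : ℝ)).mono_left inf_le_left)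
    · exact Filter.Eventually.of_forall fun n => by positivity
    · filter_upwards [hev] with n hn
      obtain ⟨h1, h2⟩ := hn
      obtain ⟨hF1, hkey⟩ := key k hk n h1 h2
      have htot : (hookSC k n \ hookSC' k n).ncard + (hookSC' k n).ncard
          = (hookSC k n).ncard :=
        Set.ncard_diff_add_ncard_of_subset (fun μ hμ => hμ.1) (hookSC_finite k n)
      have hn0 : (0:ℝ) < (n:ℝ) := by
        have : 0 < n := by omega
        exact_mod_cast this
      have htot0 : (0:ℝ) < ((hookSC k n).ncard : ℝ) := by
        have : 1 ≤ (hookSC k n).ncard := by omega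
        exact_mod_cast this
      rw [div_le_div_iff₀ htot0 hn0]
      have hnat : (hookSC k n \ hookSC' k n).ncard * n
          ≤ (16*(k*k))^(k-1) * (hookSC k n).ncard := by
        have h3 : n * (hookSC k n \ hookSC' k n).ncard
            ≤ (16*(k*k))^(k-1) * (hookSC k n).ncard :=
          le_trans hkey (Nat.mul_le_mul_left _ (by omega))
        rw [Nat.mul_comm] at h3
        exact h3
      exact_mod_cast hnat
  have heq : ∀ᶠ n in l, ((hookSC' k n).ncard : ℝ) / ((hookSC k n).ncard : ℝ)
      = 1 - ((hookSC k n \ hookSC' k n).ncard : ℝ) / ((hookSC k n).ncard : ℝ) := by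
    filter_upwards [hev] with n hn
    obtain ⟨h1, h2⟩ := hn
    obtain ⟨hF1, _⟩ := key k hk n h1 h2
    have htot : (hookSC k n \ hookSC' k n).ncard + (hookSC' k n).ncard
        = (hookSC k n).ncard :=
      Set.ncard_diff_add_ncard_of_subset (fun μ hμ => hμ.1) (hookSC_finite k n)
    have htot0 : ((hookSC k n).ncard : ℝ) ≠ 0 := by
      have : 1 ≤ (hookSC k n).ncard := by omega
      positivity
    have hcast : ((hookSC k n).ncard : ℝ)
        = ((hookSC k n \ hookSC' k n).ncard : ℝ) + ((hookSC' k n).ncard : ℝ) := by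
      exact_mod_cast htot.symm
    rw [eq_sub_iff_add_eq, ← add_div, div_eq_one_iff_eq htot0, hcast]
    ring
  have hfin : Filter.Tendsto (fun n : ℕ =>
      1 - ((hookSC k n \ hookSC' k n).ncard : ℝ) / ((hookSC k n).ncard : ℝ)) l (nhds (1-0)) :=
    tendsto_const_nhds.sub hq0
  rw [sub_zero] at hfin
  exact hfin.congr' (Filter.EventuallyEq.symm heq)

end Stmt15Aux

/-- Fix an integer `k ≥ 1`.  As `n → ∞` along integers with
`n ≡ k (mod 2)`, the ratio `|H′_sc(k,k;n)| / |H_sc(k,k;n)|` tends to `1`. -/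
theorem stmt15 (k : ℕ) (hk : 1 ≤ k) :
    Filter.Tendsto
      (fun n : ℕ => ((hookSC' k n).ncard : ℝ) / ((hookSC k n).ncard : ℝ))
      (Filter.atTop ⊓ Filter.principal {n : ℕ | n % 2 = k % 2})
      (nhds 1) :=
  Stmt15Aux.stmt15_aux k hk
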